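/- Let n ≥ 1, K ≥ 2 be integers and a : {1,…,n} → ℕ with M := Σ_{i=1}^n a_i > 0. Consider the min-max-min problem with feasible set X = {0,1}^n, nominal costs ĉ_i = −a_i, deviations d_i = M for all i, budget Γ = K−1 and K solutions. Then min over (x^1,…,x^K) ∈ X^K of max over c ∈ U^{K−1}(ĉ,d) of min over k ∈ {1,…,K} of c^⊤x^k equals −M/K if and only if there exists a partition of {1,…,n} into K pairwise disjoint sets S_1,…,S_K with S_1 ∪ … ∪ S_K = {1,…,n} and Σ_{i∈S_j} a_i = M/K for every j ∈ {1,…,K}. -/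

import Mathlib

open Finset

/-- The discrete budgeted uncertainty set
`U^Γ(ĉ,d) = { c : c i = ĉ i + δ i * d i, δ ∈ {0,1}^n, ∑ i, δ i ≤ Γ }`,
with the 0-1 vector `δ` identified with the set `D` of its nonzero coordinates. -/
noncomputable def budgetU (n : ℕ) (chat d : Fin n → ℝ) (Γ : ℕ) : Finset (Fin n → ℝ) :=
  (((Finset.univ : Finset (Fin n)).powerset.filter fun D => D.card ≤ Γ).image
    fun D i => chat i + (if i ∈ D then d i else 0))

lemma budgetU_nonempty (n : ℕ) (chat d : Fin n → ℝ) (Γ : ℕ) :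
    (budgetU n chat d Γ).Nonempty :=
  ⟨_, Finset.mem_image.mpr ⟨∅, by simp, rfl⟩⟩

/-- An arbitrary element of a finset of `Fin n` (assuming `1 ≤ n`). -/
noncomputable def pickElt {n : ℕ} (hn : 1 ≤ n) (x : Finset (Fin n)) : Fin n :=
  if h : x.Nonempty then h.choose else ⟨0, hn⟩

lemma pickElt_mem {n : ℕ} (hn : 1 ≤ n) {x : Finset (Fin n)} (h : x.Nonempty) :
    pickElt hn x ∈ x := by
  rw [pickElt, dif_pos h]; exact h.choose_spec

/-- The scenario cost vector determined by a deviation set `D`. -/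
noncomputable def cvec {n : ℕ} (a : Fin n → ℕ) (M : ℕ) (D : Finset (Fin n)) : Fin n → ℝ :=
  fun i => -(a i : ℝ) + (if i ∈ D then (M : ℝ) else 0)

/-- The inner minimum over the `K` solutions. -/
noncomputable def innerVal {n K : ℕ} (hK : 0 < K) (xs : Fin K → Finset (Fin n))
    (c : Fin n → ℝ) : ℝ :=
  Finset.univ.inf' (Finset.univ_nonempty_iff.mpr ⟨⟨0, hK⟩⟩) fun k => ∑ i ∈ xs k, c i

/-- The adversarial maximum over the uncertainty set. -/
noncomputable def supVal {n K : ℕ} (hK : 0 < K) (a : Fin n → ℕ) (M : ℕ)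
    (xs : Fin K → Finset (Fin n)) : ℝ :=
  (budgetU n (fun i => -(a i : ℝ)) (fun _ => (M : ℝ)) (K - 1)).sup'
    (budgetU_nonempty _ _ _ _) (innerVal hK xs)

/-- correctness of the reduction from the K-way equal-sum partition
problem to the min-max-min unconstrained binary problem with `ĉ = -a`, `d = M`,
budget `Γ = K - 1` and `K` solutions. -/
theorem kway_partition_reduction (n K : ℕ) (hn : 1 ≤ n) (hK : 2 ≤ K)
    (a : Fin n → ℕ) (M : ℕ) (hM : M = ∑ i, a i) (hMpos : 0 < M) :
    ((Finset.univ : Finset (Fin K → Finset (Fin n))).inf' univ_nonempty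
        fun xs => (budgetU n (fun i => -(a i : ℝ)) (fun _ => (M : ℝ)) (K - 1)).sup'
          (budgetU_nonempty _ _ _ _)
          fun c => Finset.univ.inf' (Finset.univ_nonempty_iff.mpr ⟨⟨0, by omega⟩⟩)
            fun k => ∑ i ∈ xs k, c i) = -(M : ℝ) / K ↔
    ∃ S : Fin K → Finset (Fin n),
      (∀ j l, j ≠ l → Disjoint (S j) (S l)) ∧
      Finset.univ.biUnion S = Finset.univ ∧
      ∀ j, (∑ i ∈ S j, (a i : ℝ)) = (M : ℝ) / K := by
  have hK' : 0 < K := by omega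
  haveI : Nonempty (Fin K) := ⟨⟨0, hK'⟩⟩
  change Finset.univ.inf' univ_nonempty (supVal hK' a M) = -(M : ℝ) / K ↔ _
  have hKpos : (0:ℝ) < K := by exact_mod_cast hK'
  have hMr : (0:ℝ) < M := by exact_mod_cast hMpos
  have hMKpos : (0:ℝ) < (M:ℝ)/K := div_pos hMr hKpos
  have hMcast : (M:ℝ) = ∑ i, (a i:ℝ) := by rw [hM]; push_cast; rfl
  set f : Finset (Fin n) → ℝ := fun x => ∑ i ∈ x, (a i : ℝ) with hfdef
  have hf0 : ∀ x, 0 ≤ f x := fun x => Finset.sum_nonneg fun i _ => by positivity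
  have hfM : ∀ x, f x ≤ M := by
    intro x
    rw [hMcast]
    exact Finset.sum_le_sum_of_subset_of_nonneg (Finset.subset_univ x)
      (fun i _ _ => by positivity)
  have hfpos : ∀ x : Finset (Fin n), (M:ℝ)/K ≤ f x → x.Nonempty := by
    intro x hx
    rcases x.eq_empty_or_nonempty with rfl | h
    · exfalso
      have h0 : f (∅ : Finset (Fin n)) = 0 := by simp [hfdef]
      rw [h0] at hx; linarith
    · exact h
  have hcv_mem : ∀ D : Finset (Fin n), D.card ≤ K - 1 →
      cvec a M D ∈ budgetU n (fun i => -(a i:ℝ)) (fun _ => (M:ℝ)) (K-1) := by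
    intro D hD
    exact Finset.mem_image.mpr ⟨D, by simp [hD], rfl⟩
  have hsum : ∀ (x D : Finset (Fin n)),
      ∑ i ∈ x, cvec a M D i = -(f x) + (M:ℝ) * ((x ∩ D).card) := by
    intro x D
    unfold cvec
    rw [Finset.sum_add_distrib, Finset.sum_neg_distrib, Finset.sum_ite_mem,
      Finset.sum_const, nsmul_eq_mul, mul_comm]
  -- LOWER BOUND: every xs has adversarial value at least -M/K
  have key_lb : ∀ xs : Fin K → Finset (Fin n), -(M:ℝ)/K ≤ supVal hK' a M xs := by
    intro xs
    have base : ∀ (D : Finset (Fin n)), D.card ≤ K - 1 →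
        (∀ k, f (xs k) ≤ (M:ℝ)/K ∨ (xs k ∩ D).Nonempty) → -(M:ℝ)/K ≤ supVal hK' a M xs := by
      intro D hD hall
      unfold supVal
      refine le_trans ?_ (Finset.le_sup' (innerVal hK' xs) (hcv_mem D hD))
      unfold innerVal
      refine Finset.le_inf' _ _ (fun k _ => ?_)
      rw [hsum]
      rcases hall k with h | h
      · have hpos : (0:ℝ) ≤ (M:ℝ) * ((xs k ∩ D).card) := by positivity
        rw [neg_div]
        linarith
      · have h1 : (1:ℝ) ≤ ((xs k ∩ D).card : ℝ) := by
          exact_mod_cast Finset.card_pos.mpr h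
        have h2 : (M:ℝ) * 1 ≤ (M:ℝ) * ((xs k ∩ D).card) :=
          mul_le_mul_of_nonneg_left h1 (le_of_lt hMr)
        have h3 := hfM (xs k)
        rw [neg_div]
        linarith
    by_cases hB : ∀ k, f (xs k) ≤ (M:ℝ)/K
    · exact base ∅ (by simp) (fun k => Or.inl (hB k))
    · push_neg at hB
      set B : Finset (Fin K) := Finset.univ.filter (fun k => (M:ℝ)/K < f (xs k)) with hBdef
      have hBne : ∀ k ∈ B, (xs k).Nonempty := by
        intro k hk
        exact hfpos _ (le_of_lt (Finset.mem_filter.mp hk).2)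
      by_cases hBuniv : B = Finset.univ
      · -- all sets are "heavy": there must be an overlap
        have hover : ∃ j l i, j ≠ l ∧ i ∈ xs j ∧ i ∈ xs l := by
          by_contra hcon
          push_neg at hcon
          have hdisj : ((Finset.univ : Finset (Fin K)) : Set (Fin K)).PairwiseDisjoint xs := by
            intro j _ l _ hjl
            rw [Function.onFun, Finset.disjoint_left]
            intro i hij hil
            exact (hcon j l i hjl hij) hil
          have h1 : ∑ k, f (xs k) ≤ (M:ℝ) := by
            rw [show ∑ k, f (xs k) = ∑ i ∈ Finset.univ.biUnion xs, (a i:ℝ) from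
              (Finset.sum_biUnion hdisj).symm, hMcast]
            exact Finset.sum_le_sum_of_subset_of_nonneg (Finset.subset_univ _)
              (fun i _ _ => by positivity)
          have h2 : (M:ℝ) < ∑ k, f (xs k) := by
            have hlt := Finset.sum_lt_sum_of_nonempty (Finset.univ_nonempty (α := Fin K))
              (f := fun _ => (M:ℝ)/K) (g := fun k => f (xs k))
              (fun k _ => by
                have hkB : k ∈ B := hBuniv ▸ Finset.mem_univ k
                exact (Finset.mem_filter.mp hkB).2)
            rw [Finset.sum_const, Finset.card_univ, Fintype.card_fin, nsmul_eq_mul,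
              mul_div_cancel₀ _ (ne_of_gt hKpos)] at hlt
            exact hlt
          linarith
        obtain ⟨j, l, i, hjl, hij, hil⟩ := hover
        set D := insert i ((((Finset.univ : Finset (Fin K)).erase j).erase l).image
          fun k => pickElt hn (xs k)) with hDdef
        have hDcard : D.card ≤ K - 1 := by
          have h1 := Finset.card_insert_le i
            ((((Finset.univ : Finset (Fin K)).erase j).erase l).image fun k => pickElt hn (xs k))
          have h2 := Finset.card_image_le
            (s := ((Finset.univ : Finset (Fin K)).erase j).erase l)
            (f := fun k => pickElt hn (xs k))
          have h3 : (((Finset.univ : Finset (Fin K)).erase j).erase l).card = K - 1 - 1 := by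
            rw [Finset.card_erase_of_mem (Finset.mem_erase.mpr ⟨Ne.symm hjl, Finset.mem_univ _⟩),
              Finset.card_erase_of_mem (Finset.mem_univ _), Finset.card_univ, Fintype.card_fin]
          rw [hDdef]
          omega
        refine base D hDcard (fun k => Or.inr ?_)
        by_cases hkj : k = j
        · exact ⟨i, Finset.mem_inter.mpr ⟨by rw [hkj]; exact hij, Finset.mem_insert_self _ _⟩⟩
        by_cases hkl : k = l
        · exact ⟨i, Finset.mem_inter.mpr ⟨by rw [hkl]; exact hil, Finset.mem_insert_self _ _⟩⟩
        · exact ⟨pickElt hn (xs k), Finset.mem_inter.mpr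
            ⟨pickElt_mem hn (hBne k (hBuniv ▸ Finset.mem_univ k)),
              Finset.mem_insert_of_mem (Finset.mem_image_of_mem _
                (Finset.mem_erase.mpr ⟨hkl, Finset.mem_erase.mpr ⟨hkj, Finset.mem_univ _⟩⟩))⟩⟩
      · -- the heavy sets can all be hit with at most K-1 elements
        have hDcard : (B.image fun k => pickElt hn (xs k)).card ≤ K - 1 := by
          have h1 := Finset.card_image_le (s := B) (f := fun k => pickElt hn (xs k))
          have h2 : B.card < K := by
            have hlt := Finset.card_lt_card (Finset.ssubset_univ_iff.mpr hBuniv)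
            rwa [Finset.card_univ, Fintype.card_fin] at hlt
          omega
        refine base _ hDcard (fun k => ?_)
        by_cases hk : k ∈ B
        · exact Or.inr ⟨pickElt hn (xs k), Finset.mem_inter.mpr
            ⟨pickElt_mem hn (hBne k hk), Finset.mem_image_of_mem _ hk⟩⟩
        · left
          have hnk : ¬ ((M:ℝ)/K < f (xs k)) := fun h =>
            hk (Finset.mem_filter.mpr ⟨Finset.mem_univ _, h⟩)
          linarith
  -- UPPER-BOUND CHARACTERIZATION
  have key_ub : ∀ xs : Fin K → Finset (Fin n), supVal hK' a M xs ≤ -(M:ℝ)/K ↔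
      ∀ D : Finset (Fin n), D.card ≤ K - 1 →
        ∃ k, xs k ∩ D = ∅ ∧ (M:ℝ)/K ≤ f (xs k) := by
    intro xs
    constructor
    · intro h D hD
      have h1 : innerVal hK' xs (cvec a M D) ≤ -(M:ℝ)/K :=
        le_trans (Finset.le_sup' (innerVal hK' xs) (hcv_mem D hD)) h
      obtain ⟨k, -, hk⟩ := Finset.exists_mem_eq_inf'
        (Finset.univ_nonempty_iff.mpr ⟨(⟨0, hK'⟩ : Fin K)⟩)
        (fun k => ∑ i ∈ xs k, cvec a M D i)
      have hk2 : ∑ i ∈ xs k, cvec a M D i ≤ -(M:ℝ)/K := by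
        have heq : innerVal hK' xs (cvec a M D) = ∑ i ∈ xs k, cvec a M D i := hk
        rw [heq] at h1
        exact h1
      rw [hsum] at hk2
      rcases Nat.eq_zero_or_pos ((xs k ∩ D).card) with h0 | h0
      · refine ⟨k, Finset.card_eq_zero.mp h0, ?_⟩
        rw [h0, neg_div] at hk2
        push_cast at hk2
        linarith
      · exfalso
        have h1' : (1:ℝ) ≤ ((xs k ∩ D).card : ℝ) := by exact_mod_cast h0
        have h2 : (M:ℝ) * 1 ≤ (M:ℝ) * ((xs k ∩ D).card) :=
          mul_le_mul_of_nonneg_left h1' (le_of_lt hMr)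
        have h3 := hfM (xs k)
        rw [neg_div] at hk2
        linarith
    · intro h
      unfold supVal
      refine Finset.sup'_le _ _ (fun c hc => ?_)
      obtain ⟨D, hDmem, rfl⟩ := Finset.mem_image.mp hc
      have hD : D.card ≤ K - 1 := (Finset.mem_filter.mp hDmem).2
      obtain ⟨k, hke, hkf⟩ := h D hD
      have hle : innerVal hK' xs (cvec a M D) ≤ ∑ i ∈ xs k, cvec a M D i := by
        unfold innerVal
        exact Finset.inf'_le _ (Finset.mem_univ k)
      have heq : ∑ i ∈ xs k, cvec a M D i = -(f (xs k)) := by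
        rw [hsum, hke]
        simp
      show innerVal hK' xs (cvec a M D) ≤ -(M:ℝ)/K
      rw [heq] at hle
      rw [neg_div]
      linarith
  constructor
  · -- the objective value implies the existence of a partition
    intro hobj
    obtain ⟨xs, -, hxs⟩ := Finset.exists_mem_eq_inf'
      (Finset.univ_nonempty (α := Fin K → Finset (Fin n))) (supVal hK' a M)
    have hP := (key_ub xs).mp (le_of_eq (hxs.symm.trans hobj))
    -- Step a: every solution is heavy
    have hall : ∀ k, (M:ℝ)/K ≤ f (xs k) := by
      by_contra hcon
      push_neg at hcon
      obtain ⟨k0, hk0⟩ := hcon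
      set G := Finset.univ.filter (fun k => (M:ℝ)/K ≤ f (xs k)) with hGdef
      have hGuniv : G ≠ Finset.univ := by
        intro hgu
        have hk0G : k0 ∈ G := hgu ▸ Finset.mem_univ k0
        exact absurd (Finset.mem_filter.mp hk0G).2 (not_le.mpr hk0)
      have hGcard : (G.image fun k => pickElt hn (xs k)).card ≤ K - 1 := by
        have h1 := Finset.card_image_le (s := G) (f := fun k => pickElt hn (xs k))
        have h2 : G.card < K := by
          have hlt := Finset.card_lt_card (Finset.ssubset_univ_iff.mpr hGuniv)
          rwa [Finset.card_univ, Fintype.card_fin] at hlt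
        omega
      obtain ⟨k, hke, hkf⟩ := hP _ hGcard
      have hkG : k ∈ G := Finset.mem_filter.mpr ⟨Finset.mem_univ _, hkf⟩
      have hmem : pickElt hn (xs k) ∈ xs k ∩ G.image (fun k => pickElt hn (xs k)) :=
        Finset.mem_inter.mpr ⟨pickElt_mem hn (hfpos _ hkf), Finset.mem_image_of_mem _ hkG⟩
      rw [hke] at hmem
      exact absurd hmem (Finset.notMem_empty _)
    have hne : ∀ k, (xs k).Nonempty := fun k => hfpos _ (hall k)
    -- Step b: the solutions are pairwise disjoint
    have hdisj : ∀ j l, j ≠ l → Disjoint (xs j) (xs l) := by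
      intro j l hjl
      rw [Finset.disjoint_left]
      intro i hij hil
      set D := insert i ((((Finset.univ : Finset (Fin K)).erase j).erase l).image
        fun k => pickElt hn (xs k)) with hDdef
      have hDcard : D.card ≤ K - 1 := by
        have h1 := Finset.card_insert_le i
          ((((Finset.univ : Finset (Fin K)).erase j).erase l).image fun k => pickElt hn (xs k))
        have h2 := Finset.card_image_le
          (s := ((Finset.univ : Finset (Fin K)).erase j).erase l)
          (f := fun k => pickElt hn (xs k))
        have h3 : (((Finset.univ : Finset (Fin K)).erase j).erase l).card = K - 1 - 1 := by
          rw [Finset.card_erase_of_mem (Finset.mem_erase.mpr ⟨Ne.symm hjl, Finset.mem_univ _⟩),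
            Finset.card_erase_of_mem (Finset.mem_univ _), Finset.card_univ, Fintype.card_fin]
        rw [hDdef]
        omega
      obtain ⟨k, hke, -⟩ := hP D hDcard
      have hmem : (xs k ∩ D).Nonempty := by
        by_cases hkj : k = j
        · exact ⟨i, Finset.mem_inter.mpr ⟨by rw [hkj]; exact hij, Finset.mem_insert_self _ _⟩⟩
        by_cases hkl : k = l
        · exact ⟨i, Finset.mem_inter.mpr ⟨by rw [hkl]; exact hil, Finset.mem_insert_self _ _⟩⟩
        exact ⟨pickElt hn (xs k), Finset.mem_inter.mpr ⟨pickElt_mem hn (hne k),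
          Finset.mem_insert_of_mem (Finset.mem_image_of_mem _
            (Finset.mem_erase.mpr ⟨hkl, Finset.mem_erase.mpr ⟨hkj, Finset.mem_univ _⟩⟩))⟩⟩
      rw [hke] at hmem
      exact absurd hmem (by simp)
    have hpd : ((Finset.univ : Finset (Fin K)) : Set (Fin K)).PairwiseDisjoint xs :=
      fun j _ l _ hjl => hdisj j l hjl
    -- Step c: each solution has weight exactly M/K
    have hsum_le : ∑ k, f (xs k) ≤ (M:ℝ) := by
      rw [show ∑ k, f (xs k) = ∑ i ∈ Finset.univ.biUnion xs, (a i:ℝ) from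
        (Finset.sum_biUnion hpd).symm, hMcast]
      exact Finset.sum_le_sum_of_subset_of_nonneg (Finset.subset_univ _)
        (fun i _ _ => by positivity)
    have heach : ∀ j, f (xs j) = (M:ℝ)/K := by
      intro j
      refine le_antisymm ?_ (hall j)
      have h1 : ((Finset.univ.erase j).card : ℝ) * ((M:ℝ)/K)
          ≤ ∑ k ∈ Finset.univ.erase j, f (xs k) := by
        have hn1 := Finset.card_nsmul_le_sum (Finset.univ.erase j) (fun k => f (xs k))
          ((M:ℝ)/K) (fun k _ => hall k)
        rwa [nsmul_eq_mul] at hn1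
      have h2 : f (xs j) + ∑ k ∈ Finset.univ.erase j, f (xs k) = ∑ k, f (xs k) :=
        Finset.add_sum_erase _ (fun k => f (xs k)) (Finset.mem_univ j)
      have h3 : ((Finset.univ.erase j).card : ℝ) = (K:ℝ) - 1 := by
        rw [Finset.card_erase_of_mem (Finset.mem_univ _), Finset.card_univ, Fintype.card_fin,
          Nat.cast_sub (by omega), Nat.cast_one]
      rw [h3] at h1
      have h4 : ((K:ℝ) - 1) * ((M:ℝ)/K) = (M:ℝ) - (M:ℝ)/K := by
        field_simp
      linarith
    -- the uncovered elements have total weight zero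
    have hbiu : ∑ i ∈ Finset.univ.biUnion xs, (a i:ℝ) = (M:ℝ) := by
      rw [Finset.sum_biUnion hpd]
      rw [show (fun k => ∑ i ∈ xs k, (a i:ℝ)) = fun k => f (xs k) from rfl]
      rw [Finset.sum_congr rfl (fun k _ => heach k), Finset.sum_const, Finset.card_univ,
        Fintype.card_fin, nsmul_eq_mul, mul_div_cancel₀ _ (ne_of_gt hKpos)]
    have hrest : ∑ i ∈ Finset.univ \ Finset.univ.biUnion xs, (a i:ℝ) = 0 := by
      have hs := Finset.sum_sdiff (Finset.subset_univ (Finset.univ.biUnion xs))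
        (f := fun i => (a i:ℝ))
      rw [hbiu, ← hMcast] at hs
      linarith
    -- build the partition
    set k0 : Fin K := ⟨0, hK'⟩ with hk0def
    refine ⟨fun k => if k = k0 then xs k0 ∪ (Finset.univ \ Finset.univ.biUnion xs) else xs k,
      ?_, ?_, ?_⟩
    · intro j l hjl
      dsimp only
      by_cases hj : j = k0 <;> by_cases hl : l = k0
      · exact absurd (hj.trans hl.symm) hjl
      · rw [if_pos hj, if_neg hl]
        refine Finset.disjoint_union_left.mpr ⟨?_, ?_⟩
        · exact hdisj _ _ (hj ▸ hjl)
        · exact Finset.disjoint_of_subset_right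
            (Finset.subset_biUnion_of_mem xs (Finset.mem_univ l)) Finset.sdiff_disjoint
      · rw [if_neg hj, if_pos hl]
        refine Finset.disjoint_union_right.mpr ⟨?_, ?_⟩
        · exact hdisj _ _ (hl ▸ hjl)
        · exact Finset.disjoint_of_subset_left
            (Finset.subset_biUnion_of_mem xs (Finset.mem_univ j)) Finset.sdiff_disjoint.symm
      · rw [if_neg hj, if_neg hl]
        exact hdisj _ _ hjl
    · rw [Finset.eq_univ_iff_forall]
      intro i
      rw [Finset.mem_biUnion]
      by_cases hi : i ∈ Finset.univ.biUnion xs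
      · obtain ⟨k, -, hik⟩ := Finset.mem_biUnion.mp hi
        by_cases hk : k = k0
        · exact ⟨k0, Finset.mem_univ _, by
            rw [if_pos rfl]
            exact Finset.mem_union_left _ (by rw [← hk]; exact hik)⟩
        · exact ⟨k, Finset.mem_univ _, by rw [if_neg hk]; exact hik⟩
      · exact ⟨k0, Finset.mem_univ _, by
          rw [if_pos rfl]
          exact Finset.mem_union_right _ (Finset.mem_sdiff.mpr ⟨Finset.mem_univ _, hi⟩)⟩
    · intro j
      dsimp only
      by_cases hj : j = k0
      · rw [if_pos hj]
        have hd : Disjoint (xs k0) (Finset.univ \ Finset.univ.biUnion xs) :=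
          Finset.disjoint_of_subset_left
            (Finset.subset_biUnion_of_mem xs (Finset.mem_univ k0)) Finset.sdiff_disjoint.symm
        rw [Finset.sum_union hd, hrest, add_zero]
        exact heach k0
      · rw [if_neg hj]
        exact heach j
  · -- a partition gives the objective value
    rintro ⟨S, hdisjS, -, hsumS⟩
    have hFS : supVal hK' a M S ≤ -(M:ℝ)/K := by
      refine (key_ub S).mpr (fun D hD => ?_)
      by_contra hcon
      push_neg at hcon
      simp only [hfdef] at hcon
      have hne' : ∀ k, (S k ∩ D).Nonempty := by
        intro k
        rw [Finset.nonempty_iff_ne_empty]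
        intro hemp
        exact absurd (le_of_eq (hsumS k).symm) (not_le.mpr (hcon k hemp))
      have hKD : K ≤ D.card := by
        have hcard := Finset.card_le_card_of_injOn (s := (Finset.univ : Finset (Fin K))) (t := D)
          (fun k => pickElt hn (S k ∩ D))
          (fun k _ => (Finset.mem_inter.mp (pickElt_mem hn (hne' k))).2)
          ?_
        · rwa [Finset.card_univ, Fintype.card_fin] at hcard
        · intro k _ l _ hpe
          by_contra hkl
          have hpe' : pickElt hn (S k ∩ D) = pickElt hn (S l ∩ D) := hpe
          have h1 := (Finset.mem_inter.mp (pickElt_mem hn (hne' k))).1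
          have h2 := (Finset.mem_inter.mp (pickElt_mem hn (hne' l))).1
          rw [hpe'] at h1
          exact (Finset.disjoint_left.mp (hdisjS k l hkl)) h1 h2
      omega
    refine le_antisymm (le_trans (Finset.inf'_le _ (Finset.mem_univ S)) hFS) ?_
    exact Finset.le_inf' _ _ (fun xs _ => key_lb xs)
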